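/- Let m > 3 and let a = (a_1 ≤ a_2 ≤ … ≤ a_m) be an m-tuple of positive integers satisfying KE conditions (1) and (2) and the sphere condition. Then the product of the first m-1 entries satisfies a_1·a_2···a_{m-1} ≤ m!·(c_m - 1), where (c_k) is the extremal sequence; consequently if Σ_{i=1}^{m-1} 1/a_i > 1 then Σ_{i=1}^{m-1} 1/a_i > 1 + 1/(m!·(c_m - 1)). -/

import Mathlib

/-- The extremal (Sylvester/Euclid) sequence: `c 1 = 2` and `c (k+1) = c k ^ 2 - c k + 1`
(the value at index `0` is a junk value). -/
def extremal : ℕ → ℕ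
  | 0 => 1
  | 1 => 2
  | (n + 2) => extremal (n + 1) ^ 2 - extremal (n + 1) + 1

/-- The minimum of a rational-valued function on a finite type (junk value `0` if empty). -/
def finMin {α : Type*} [Fintype α] (f : α → ℚ) : ℚ :=
  if h : (Finset.univ : Finset α).Nonempty then Finset.univ.inf' h f else 0

/-- The sum of reciprocals `∑ i, 1/(a i)` of an `m`-tuple, as a rational number. -/
def recipSum {m : ℕ} (a : Fin m → ℕ) : ℚ :=
  ∑ i, (1 : ℚ) / (a i : ℚ)

/-- KE condition (1): `1 < ∑ i, 1/(a i)`. -/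
def KE1 {m : ℕ} (a : Fin m → ℕ) : Prop :=
  1 < recipSum a

/-- KE condition (2): `∑ i, 1/(a i) < 1 + ((m-1)/(m-2)) * min_i (1/(a i))`. -/
def KE2 {m : ℕ} (a : Fin m → ℕ) : Prop :=
  recipSum a < 1 + ((m : ℚ) - 1) / ((m : ℚ) - 2) * finMin (fun i : Fin m => (1 : ℚ) / (a i : ℚ))

/-- `b j = gcd(a j, lcm(a i : i ≠ j))`. -/
def bFactor {m : ℕ} (a : Fin m → ℕ) (j : Fin m) : ℕ :=
  Nat.gcd (a j) ((Finset.univ.erase j).lcm a)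

/-- KE condition (3): `∑ i, 1/(a i) < 1 + ((m-1)/(m-2)) * min_{i,j} (1/(b i * b j))`. -/
def KE3 {m : ℕ} (a : Fin m → ℕ) : Prop :=
  recipSum a < 1 + ((m : ℚ) - 1) / ((m : ℚ) - 2) *
    finMin (fun p : Fin m × Fin m => (1 : ℚ) / ((bFactor a p.1 * bFactor a p.2 : ℕ) : ℚ))

/-- Adjacency in the graph `G(a)`: distinct vertices `i`, `j` are joined by an edge
iff `gcd(a i, a j) > 1`. -/
def GraphAdj {m : ℕ} (a : Fin m → ℕ) (i j : Fin m) : Prop :=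
  i ≠ j ∧ 1 < Nat.gcd (a i) (a j)

/-- A vertex of `G(a)` is isolated if it lies on no edge. -/
def IsIsolated {m : ℕ} (a : Fin m → ℕ) (i : Fin m) : Prop :=
  ∀ j, ¬ GraphAdj a i j

/-- `C_ev`: the connected component of `G(a)` determined by the even entries, i.e. the set of
vertices reachable in `G(a)` from some vertex `i` with `a i` even. -/
def Cev {m : ℕ} (a : Fin m → ℕ) : Set (Fin m) :=
  {j | ∃ i, Even (a i) ∧ Relation.ReflTransGen (GraphAdj a) i j}

/-- The sphere condition (Brieskorn): either `G(a)` has at least two isolated vertices, or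
`G(a)` has exactly one isolated vertex `i` with `a i` odd, `C_ev` has an odd number of
vertices, and `gcd(a i, a j) = 2` for any two distinct vertices `i`, `j` of `C_ev`. -/
def SphereCond {m : ℕ} (a : Fin m → ℕ) : Prop :=
  (∃ i j : Fin m, i ≠ j ∧ IsIsolated a i ∧ IsIsolated a j) ∨
  ((∃ i : Fin m, IsIsolated a i ∧ Odd (a i) ∧ ∀ j : Fin m, IsIsolated a j → j = i) ∧
    Odd (Cev a).ncard ∧
    ∀ i ∈ Cev a, ∀ j ∈ Cev a, i ≠ j → Nat.gcd (a i) (a j) = 2)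

namespace KA

def e : ℕ → ℕ
  | 0 => 1
  | n+1 => e n * (e n + 1)

lemma e_pos : ∀ n, 0 < e n
  | 0 => one_pos
  | n+1 => by have := e_pos n; simp [e]; positivity

lemma one_le_e (n : ℕ) : 1 ≤ e n := e_pos n
lemma e_succ (n : ℕ) : e (n+1) = e n * (e n + 1) := rfl
lemma e_le_succ (n : ℕ) : e n ≤ e (n+1) := by rw [e_succ]; nlinarith [e_pos n]
lemma e_mono : Monotone e := monotone_nat_of_le_succ e_le_succ

lemma e_ge_add_two : ∀ n, 2 ≤ n → n + 2 ≤ e n := by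
  intro n hn
  induction n, hn using Nat.le_induction with
  | base => norm_num [e]
  | succ k hk ih =>
    have h1 := ih
    have h2 := e_pos k
    rw [e_succ]; nlinarith

lemma fact_le_e : ∀ n, 4 ≤ n → (n+2).factorial ≤ e n := by
  intro n hn
  induction n, hn using Nat.le_induction with
  | base => norm_num [e, Nat.factorial]
  | succ k hk ih =>
    have h1 := ih
    have h2 : k + 2 ≤ e k := e_ge_add_two k (by omega)
    rw [e_succ]
    calc (k+1+2).factorial = (k+3) * (k+2).factorial := rfl
      _ ≤ (e k + 1) * e k := Nat.mul_le_mul (by omega) h1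
      _ = e k * (e k + 1) := by ring

def sr (l : List ℕ) : ℚ := (l.map fun y => (1:ℚ)/y).sum
def dl (l : List ℕ) : ℚ := 1 - sr l
def Pn (l : List ℕ) : ℕ := l.prod

@[simp] lemma sr_nil : sr [] = 0 := rfl
@[simp] lemma dl_nil : dl [] = 1 := by simp [dl, sr]
@[simp] lemma Pn_nil : Pn [] = 1 := rfl
lemma sr_cons (x : ℕ) (l : List ℕ) : sr (x :: l) = 1/(x:ℚ) + sr l := by simp [sr]
lemma dl_cons (x : ℕ) (l : List ℕ) : dl (x :: l) = dl l - 1/(x:ℚ) := by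
  simp [dl, sr_cons]; ring
lemma Pn_cons (x : ℕ) (l : List ℕ) : Pn (x :: l) = x * Pn l := rfl

lemma sr_nonneg (l : List ℕ) : 0 ≤ sr l := by
  induction l with
  | nil => simp
  | cons x t ih => rw [sr_cons]; positivity

lemma sr_append (l₁ l₂ : List ℕ) : sr (l₁ ++ l₂) = sr l₁ + sr l₂ := by simp [sr]

def Gd (l : List ℕ) : Prop := l.Pairwise (fun a b => b ≤ a) ∧ ∀ y ∈ l, 2 ≤ y

lemma Gd_nil : Gd [] := ⟨List.Pairwise.nil, by simp⟩

lemma Gd_of_cons {x : ℕ} {l : List ℕ} (h : Gd (x :: l)) : Gd l :=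
  ⟨(List.pairwise_cons.1 h.1).2, fun y hy => h.2 y (List.mem_cons_of_mem _ hy)⟩

lemma Gd_head_ge {x : ℕ} {l : List ℕ} (h : Gd (x :: l)) : ∀ y ∈ l, y ≤ x :=
  (List.pairwise_cons.1 h.1).1

lemma Gd_suffix {l t s : List ℕ} (h : Gd l) (hts : l = t ++ s) : Gd s := by
  subst hts
  exact ⟨h.1.sublist (List.sublist_append_right t s),
    fun y hy => h.2 y (List.mem_append_right t hy)⟩

lemma Pn_pos {l : List ℕ} (h : Gd l) : 0 < Pn l := by
  induction l with
  | nil => simp [Pn]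
  | cons x t ih =>
    rw [Pn_cons]
    exact Nat.mul_pos (lt_of_lt_of_le two_pos (h.2 x (by simp))) (ih (Gd_of_cons h))

lemma Pn_two {x : ℕ} {l : List ℕ} (h : Gd (x :: l)) : 2 ≤ Pn (x :: l) := by
  rw [Pn_cons]
  have h1 := h.2 x (by simp)
  have h2 := Pn_pos (Gd_of_cons h)
  nlinarith

lemma int_PD : ∀ (l : List ℕ), (∀ y ∈ l, 1 ≤ y) → ∃ N : ℤ, (N:ℚ) = (Pn l : ℚ) * dl l
  | [], _ => ⟨1, by simp⟩
  | (x :: t), h => by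
    obtain ⟨N, hN⟩ := int_PD t (fun y hy => h y (List.mem_cons_of_mem _ hy))
    refine ⟨x * N - Pn t, ?_⟩
    have hx : (x:ℚ) ≠ 0 := by
      have := h x (by simp); positivity
    rw [dl_cons, Pn_cons]
    push_cast
    rw [hN]
    field_simp

lemma one_le_PD {l : List ℕ} (hg : Gd l) (hpos : 0 < dl l) : 1 ≤ (Pn l : ℚ) * dl l := by
  obtain ⟨N, hN⟩ := int_PD l (fun y hy => le_trans one_le_two (hg.2 y hy))
  have hP : (0:ℚ) < (Pn l : ℚ) := by exact_mod_cast Pn_pos hg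
  have h0 : (0:ℚ) < (N:ℚ) := by rw [hN]; positivity
  have : (1:ℤ) ≤ N := by exact_mod_cast h0
  rw [← hN]; exact_mod_cast this

/-- deficiency of a suffix: dl s = dl l + sr t when l = t ++ s -/
lemma dl_suffix {l t s : List ℕ} (hts : l = t ++ s) : dl s = dl l + sr t := by
  subst hts; simp [dl, sr_append]; ring

lemma dl_suffix_pos {l t s : List ℕ} (hts : l = t ++ s) (h : 0 < dl l) : 0 < dl s := by
  rw [dl_suffix hts]
  have := sr_nonneg t
  linarith

/-- bound on sum of reciprocals of a list of elements all ≥ y -/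
lemma sr_le_of_ge (t : List ℕ) (y : ℕ) (hy : 0 < y) (h : ∀ z ∈ t, y ≤ z) :
    sr t * y ≤ t.length := by
  induction t with
  | nil => simp
  | cons z t ih =>
    have hz := h z (by simp)
    have hz0 : (0:ℚ) < (z:ℚ) := by exact_mod_cast lt_of_lt_of_le hy hz
    have hy0 : (0:ℚ) < (y:ℚ) := by exact_mod_cast hy
    have hyz : (y:ℚ) ≤ z := by exact_mod_cast hz
    have h1 : (1/(z:ℚ)) * y ≤ 1 := by
      rw [div_mul_eq_mul_div, div_le_one hz0]; linarith
    have h2 := ih (fun w hw => h w (List.mem_cons_of_mem _ hw))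
    rw [sr_cons, add_mul]
    simp only [List.length_cons]
    push_cast
    linarith

/-- Cascade bound (used in the "pocket" case): if the parent deficiency is small
(`dl p < 1/e_{ν+1} + 2/x`), then the product of any suffix of `p` is bounded. -/
lemma cascade (p : List ℕ) (hg : Gd p) (hpos : 0 < dl p) (x : ℕ)
    (hxall : ∀ y ∈ p, y ≤ x)
    (hIHK : ∀ s : List ℕ, Gd s → 0 < dl s → s.length ≤ p.length → 1 ≤ dl s * e s.length)
    (hDB : dl p * (e (p.length + 1) : ℚ) * x < x + 2 * (e (p.length + 1) : ℚ)) :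
    ∀ (s t : List ℕ), p = t ++ s →
      Pn s * (t.length + 2).factorial ≤ (p.length + 2).factorial * e s.length := by
  intro s
  induction s with
  | nil =>
    intro t ht
    have hlen : t.length = p.length := by rw [ht]; simp
    simp [Pn, e, hlen]
  | cons y s' ih =>
    intro t ht
    have ht' : p = (t ++ [y]) ++ s' := by rw [ht]; simp
    have hlen : p.length = t.length + 1 + s'.length := by rw [ht]; simp; omega
    set k := s'.length with hk
    set L := t.length with hL
    set F := (p.length + 2).factorial with hF
    have hIH := ih (t ++ [y]) ht'
    simp only [List.length_append, List.length_cons, List.length_nil] at hIH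
    -- hIH : Pn s' * (L + 1 + 2).factorial ≤ F * e k
    -- facts about y
    have hymem : y ∈ p := by rw [ht]; exact List.mem_append_right _ (by simp)
    have hy2 : 2 ≤ y := hg.2 y hymem
    have hyx : y ≤ x := hxall y hymem
    -- suffix facts
    have hGs' : Gd s' := Gd_suffix hg ht'
    have hps' : 0 < dl s' := dl_suffix_pos ht' hpos
    have hKs' : 1 ≤ dl s' * e k := hIHK s' hGs' hps' (by omega)
    have hsplit : dl s' = dl p + sr (t ++ [y]) := dl_suffix ht'
    -- all elements of t ++ [y] are ≥ y
    have helem : ∀ z ∈ t ++ [y], y ≤ z := by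
      intro z hz
      rcases List.mem_append.1 hz with hz | hz
      · have hpw := hg.1
        rw [ht] at hpw
        have := (List.pairwise_append.1 hpw).2.2 z hz y (by simp)
        exact this
      · simp at hz; omega
    have hsr : sr (t ++ [y]) * y ≤ (L + 1 : ℚ) := by
      have := sr_le_of_ge (t ++ [y]) y (by omega) helem
      simpa using this
    -- rational bound on y
    set Y : ℚ := (y : ℚ) with hY
    set X : ℚ := (x : ℚ) with hX
    set ek : ℚ := (e k : ℚ) with hek
    set E1 : ℚ := (e (p.length + 1) : ℚ) with hE1
    have hY0 : (0:ℚ) < Y := by rw [hY]; exact_mod_cast by omega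
    have hX0 : (0:ℚ) < X := by rw [hX]; exact_mod_cast by omega
    have hYX : Y ≤ X := by rw [hY, hX]; exact_mod_cast hyx
    have hek1 : (1:ℚ) ≤ ek := by rw [hek]; exact_mod_cast one_le_e k
    have hE10 : (0:ℚ) < E1 := by rw [hE1]; exact_mod_cast e_pos _
    have h4 : ek * (ek + 1) ≤ E1 := by
      rw [hek, hE1]
      have h := e_mono (show k + 1 ≤ p.length + 1 by omega)
      rw [e_succ] at h
      exact_mod_cast h
    have hdlp0 : 0 < dl p := hpos
    -- transfer hDB from x to y
    have h3 : dl p * E1 * Y < Y + 2 * E1 := by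
      rcases le_or_gt (dl p * E1) 1 with hc | hc
      · nlinarith
      · have h5 : (dl p * E1 - 1) * Y ≤ (dl p * E1 - 1) * X := by
          apply mul_le_mul_of_nonneg_left hYX; linarith
        nlinarith
    -- main chain
    have hsrnn : 0 ≤ sr (t ++ [y]) := sr_nonneg _
    have k1 : Y * E1 ≤ (dl p + sr (t ++ [y])) * ek * (Y * E1) := by
      rw [hsplit] at hKs'
      have := mul_le_mul_of_nonneg_right hKs' (le_of_lt (mul_pos hY0 hE10))
      linarith [this]
    have k2 : Y * E1 ≤ Y * ek + ek * E1 * ((L:ℚ) + 3) := by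
      have e1 : (dl p + sr (t ++ [y])) * ek * (Y * E1) =
          (dl p * E1 * Y) * ek + (sr (t ++ [y]) * Y) * (ek * E1) := by ring
      have e2 : (sr (t ++ [y]) * Y) * (ek * E1) ≤ ((L:ℚ)+1) * (ek * E1) := by
        apply mul_le_mul_of_nonneg_right _ (by positivity)
        calc sr (t ++ [y]) * Y = sr (t ++ [y]) * (y:ℚ) := by rw [hY]
          _ ≤ (L + 1 : ℚ) := hsr
      have e3 : (dl p * E1 * Y) * ek ≤ (Y + 2*E1) * ek := by
        apply mul_le_mul_of_nonneg_right (le_of_lt h3) (by linarith)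
      have e4 : (Y + 2*E1) * ek + ((L:ℚ)+1) * (ek * E1) = Y * ek + ek * E1 * ((L:ℚ) + 3) := by
        ring
      calc Y * E1 ≤ (dl p + sr (t ++ [y])) * ek * (Y * E1) := k1
        _ = (dl p * E1 * Y) * ek + (sr (t ++ [y]) * Y) * (ek * E1) := e1
        _ ≤ (Y + 2*E1) * ek + ((L:ℚ)+1) * (ek * E1) := by linarith
        _ = Y * ek + ek * E1 * ((L:ℚ) + 3) := e4
    have k3 : (ek * E1) * Y ≤ (ek * E1) * (((L:ℚ)+3) * (ek+1)) := by
      have e5 : Y * (E1 - ek) ≤ ek * E1 * ((L:ℚ)+3) := by linarith [k2]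
      have e6 : ek * E1 ≤ (ek + 1) * (E1 - ek) := by nlinarith
      calc (ek * E1) * Y = Y * (ek * E1) := by ring
        _ ≤ Y * ((ek + 1) * (E1 - ek)) := mul_le_mul_of_nonneg_left e6 (le_of_lt hY0)
        _ = (ek + 1) * (Y * (E1 - ek)) := by ring
        _ ≤ (ek + 1) * (ek * E1 * ((L:ℚ)+3)) :=
            mul_le_mul_of_nonneg_left e5 (by linarith)
        _ = (ek * E1) * (((L:ℚ)+3) * (ek+1)) := by ring
    have k4 : Y ≤ ((L:ℚ)+3) * (ek+1) :=
      (mul_le_mul_iff_right₀ (show (0:ℚ) < ek * E1 by positivity)).mp k3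
    -- natural number version
    have hynat : y ≤ (L + 3) * (e k + 1) := by
      have h7 : ((y:ℕ):ℚ) ≤ (((L+3) * (e k + 1) : ℕ) : ℚ) := by push_cast; push_cast at k4; linarith
      exact_mod_cast h7
    -- natural number chain
    have c1 : Pn (y :: s') * (L + 2).factorial * (L + 3) = y * (Pn s' * (L + 3).factorial) := by
      rw [Pn_cons]
      have h8 : (L + 3).factorial = (L + 3) * (L + 2).factorial := rfl
      rw [h8]; ring
    have c2 : y * (Pn s' * (L + 3).factorial) ≤ y * (F * e k) := by
      apply Nat.mul_le_mul_left
      have h9 : (L + 1 + 2) = L + 3 := by omega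
      rw [h9] at hIH; exact hIH
    have c3 : y * (F * e k) ≤ (L + 3) * (F * e (k+1)) := by
      calc y * (F * e k) ≤ ((L + 3) * (e k + 1)) * (F * e k) := Nat.mul_le_mul_right _ hynat
        _ = (L + 3) * (F * (e k * (e k + 1))) := by ring
        _ = (L + 3) * (F * e (k+1)) := by rw [← e_succ]
    have c4 : Pn (y :: s') * (L + 2).factorial * (L + 3) ≤ (F * e (k+1)) * (L + 3) := by
      calc Pn (y :: s') * (L + 2).factorial * (L + 3) = y * (Pn s' * (L + 3).factorial) := c1
        _ ≤ y * (F * e k) := c2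
        _ ≤ (L + 3) * (F * e (k+1)) := c3
        _ = (F * e (k+1)) * (L + 3) := by ring
    have c5 : Pn (y :: s') * (L + 2).factorial ≤ F * e (k + 1) :=
      Nat.le_of_mul_le_mul_right c4 (by omega)
    simpa using c5

/-- transfer a "small deficiency" bound from `X` to a smaller positive `Y` -/
lemma transfer {D c Y X : ℚ} (hD : 0 < D) (hY : 0 < Y) (hYX : Y ≤ X) (hc : 0 < c)
    (h : D*c*X < X + 2*c) : D*c*Y < Y + 2*c := by
  rcases le_or_gt (D*c) 1 with h1 | h1
  · nlinarith
  · have h2 : (D*c - 1) * Y ≤ (D*c - 1) * X := by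
      apply mul_le_mul_of_nonneg_left hYX; linarith
    nlinarith

lemma LA_K {D X P E1 : ℚ} (hX0 : 0 < X) (hP1 : 1 ≤ P) (hE10 : 0 < E1)
    (hT : 1 ≤ P * X * (D - 1/X)) (hD1 : P + 1 ≤ D * E1) :
    1 ≤ (D - 1/X) * E1 := by
  have hXne : X ≠ 0 := ne_of_gt hX0
  have e0 : ((D - 1/X) * (P + 1) - D) * X = P * X * (D - 1/X) - 1 := by
    field_simp; ring
  have hq : D ≤ (D - 1/X) * (P + 1) := by nlinarith
  have q1 : D * E1 ≤ ((D - 1/X) * (P + 1)) * E1 :=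
    mul_le_mul_of_nonneg_right hq (by linarith)
  by_contra hc
  push_neg at hc
  have h8 : ((D - 1/X)*E1)*(P+1) < 1*(P+1) := mul_lt_mul_of_pos_right hc (by linarith)
  nlinarith [q1, hD1, h8]

lemma LA_i {D X P E1 E2 : ℚ} (hX0 : 0 < X) (hP1 : 1 ≤ P) (hE10 : 0 < E1)
    (hT : 1 ≤ P * X * (D - 1/X)) (h1 : P * X ≤ E1) (hE2 : E2 = E1 * (E1+1)) :
    P * X + 1 ≤ (D - 1/X) * E2 := by
  subst hE2
  have hPX0 : (0:ℚ) < P * X := by positivity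
  have r1 : (P*X) * (P*X + 1) ≤ E1 * (E1 + 1) :=
    mul_le_mul h1 (by linarith) (by positivity) (by linarith)
  have hE20 : (0:ℚ) < E1 * (E1+1) := by positivity
  have r2 : 1 ≤ (D - 1/X) * (P * X) := by linarith [hT]
  have r3 : (E1*(E1+1)) * 1 ≤ (E1*(E1+1)) * ((D - 1/X) * (P * X)) :=
    mul_le_mul_of_nonneg_left r2 (by linarith)
  have r4 : (P*X + 1) * (P*X) ≤ ((D - 1/X) * (E1*(E1+1))) * (P*X) := by
    nlinarith [r1, r3]
  exact (mul_le_mul_iff_left₀ hPX0).mp r4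

lemma LA_ii {D X P E1 E2 : ℚ} (hX0 : 0 < X) (hP1 : 1 ≤ P) (hE10 : 0 < E1)
    (hD1 : P + 1 ≤ D * E1) (h1 : E1 ≤ P * X) (h2 : X ≤ E1 + 1)
    (hE2 : E2 = E1 * (E1+1)) :
    P * X + 1 ≤ (D - 1/X) * E2 := by
  subst hE2
  have hXne : X ≠ 0 := ne_of_gt hX0
  have hint1 : 0 ≤ (P*X - E1) * (E1 + 1 - X) := mul_nonneg (by linarith) (by linarith)
  have hint2 : (P+1) * (X*(E1+1)) ≤ (D*E1) * (X*(E1+1)) :=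
    mul_le_mul_of_nonneg_right hD1 (by positivity)
  have u0 : ((D - 1/X)*(E1*(E1+1)))*X = (E1*(E1+1)) * (D*X) - E1*(E1+1) := by
    field_simp
  have u1 : (P*X + 1) * X ≤ ((D - 1/X) * (E1*(E1+1))) * X := by
    nlinarith [hint1, hint2, u0]
  exact (mul_le_mul_iff_left₀ hX0).mp u1

lemma LA_iii {D X P E1 : ℚ} (hX0 : 0 < X) (hE10 : 0 < E1)
    (hD1 : P + 1 ≤ D * E1) (hP2 : 2 ≤ P) (h2 : E1 + 1 < X) :
    E1 + X ≤ (D - 1/X) * E1 * X := by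
  have hXne : X ≠ 0 := ne_of_gt hX0
  have v1 : (P+1) * X ≤ (D*E1) * X := mul_le_mul_of_nonneg_right hD1 (by linarith)
  have v2 : (D - 1/X)*E1*X = (D*E1)*X - E1 := by field_simp
  nlinarith [v1, v2, mul_nonneg (show (0:ℚ) ≤ P - 2 by linarith) (le_of_lt hX0)]

lemma LA_iii0 {D X : ℚ} (hX4 : 4 ≤ X) (hD : D = 1) :
    2 + X ≤ (D - 1/X) * 2 * X := by
  have hXne : X ≠ 0 := by positivity
  have v2 : (D - 1/X)*2*X = (D*2)*X - 2 := by field_simp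
  rw [hD] at v2; nlinarith [v2]

lemma LB_de {D X W ee : ℚ} (hX0 : 0 < X) (hW0 : 0 < W) (hWX : W ≤ X) (hee1 : 1 ≤ ee)
    (hD2 : ee + W ≤ D * ee * W) : 1 ≤ (D - 1/X) * ee := by
  have hXne : X ≠ 0 := ne_of_gt hX0
  have h5a : (D - 1/X)*ee*W*X = (D*ee*W)*X - ee*W := by field_simp
  have h5b : (ee + W)*X ≤ (D*ee*W)*X := mul_le_mul_of_nonneg_right hD2 (by linarith)
  have h5c : ee*W ≤ ee*X := mul_le_mul_of_nonneg_left hWX (by linarith)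
  have h5 : W*X ≤ (D - 1/X)*ee*W*X := by nlinarith [h5a, h5b, h5c]
  by_contra hc
  push_neg at hc
  have h6 : (D - 1/X)*ee*(W*X) < 1*(W*X) := mul_lt_mul_of_pos_right hc (by positivity)
  nlinarith [h5, h6]

lemma LB_A {D X W ee E1 : ℚ} (hX0 : 0 < X) (hW0 : 0 < W) (hWX : W ≤ X) (hee1 : 1 ≤ ee)
    (hD2 : ee + W ≤ D * ee * W) (hE1 : E1 = ee*(ee+1))
    (hB : (D - 1/X)*E1*X < E1 + X) :
    X*(W + ee + 1) < 2*(ee+1)*W := by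
  subst hE1
  have hXne : X ≠ 0 := ne_of_gt hX0
  have h5a : (D - 1/X)*ee*W*X = (D*ee*W)*X - ee*W := by field_simp
  have h5b : (ee + W)*X ≤ (D*ee*W)*X := mul_le_mul_of_nonneg_right hD2 (by linarith)
  have a1 : (D - 1/X)*(ee*(ee+1))*X*W < (ee*(ee+1)+X)*W := mul_lt_mul_of_pos_right hB hW0
  have a2 : (ee+1)*(W*X + ee*X - ee*W) ≤ (ee+1)*((D - 1/X)*ee*W*X) := by
    apply mul_le_mul_of_nonneg_left _ (by linarith)
    nlinarith [h5a, h5b]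
  have a4 : (ee+1)*(W*X + ee*X - ee*W) < (ee*(ee+1)+X)*W := by nlinarith [a1, a2]
  have a5 : ee*(X*(W + ee + 1) - 2*(ee+1)*W) < 0 := by nlinarith [a4]
  by_contra hcc
  push_neg at hcc
  nlinarith [a5, mul_nonneg (show (0:ℚ) ≤ ee by linarith)
    (show (0:ℚ) ≤ X*(W + ee + 1) - 2*(ee+1)*W by linarith)]

lemma LB_v1 {D X P ee E1 E2 : ℚ} (hX0 : 0 < X) (hee1 : 1 ≤ ee)
    (hde : 1 ≤ (D - 1/X) * ee) (h3 : P*X + 1 ≤ (ee+1)*(E1+1))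
    (hE1 : E1 = ee*(ee+1)) (hE2 : E2 = E1*(E1+1)) :
    P * X + 1 ≤ (D - 1/X) * E2 := by
  subst hE2; subst hE1
  have b1 : ((ee+1)*(ee*(ee+1)+1)) * 1 ≤ ((ee+1)*(ee*(ee+1)+1)) * ((D - 1/X)*ee) :=
    mul_le_mul_of_nonneg_left hde (by positivity)
  nlinarith [b1, h3]

lemma PK1 {D W : ℚ} (hW2 : 2 ≤ W) (hDW : D = 1 - 1/W)
    (hD2 : 2 + W ≤ D*2*W) (hDBW : D*6*W < W + 12) : False := by
  have hWne : W ≠ 0 := by intro h; rw [h] at hW2; norm_num at hW2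
  have c1 : D*2*W = 2*W - 2 := by rw [hDW]; field_simp
  have c2 : D*6*W = 6*W - 6 := by rw [hDW]; field_simp
  rw [c1] at hD2; rw [c2] at hDBW
  linarith

lemma PK2 {D U W X : ℚ} (hU2 : 2 ≤ U) (hUW : U ≤ W) (hWX : W ≤ X)
    (hD : D = 1 - 1/U - 1/W)
    (hDBW : D*42*W < W + 84) (hDBU : D*42*U < U + 84)
    (hA : X*(W + 7) < 14*W) (hpk : 301 ≤ U*W*X) : False := by
  have hU0 : (0:ℚ) < U := by linarith
  have hW0 : (0:ℚ) < W := by linarith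
  have hX0 : (0:ℚ) < X := by linarith
  have hiU : 1/U ≤ 1/2 := one_div_le_one_div_of_le two_pos hU2
  have hiW : 1/W ≤ 1/U := one_div_le_one_div_of_le hU0 hUW
  have hWW : (1/W)*W = 1 := by field_simp
  have hUU : (1/U)*U = 1 := by field_simp
  -- W < 63/10
  have d1 : (1/2 - 1/W) ≤ D := by rw [hD]; linarith
  have d2 : (1/2 - 1/W)*(42*W) ≤ D*(42*W) := by
    apply mul_le_mul_of_nonneg_right d1 (by positivity)
  have d3 : (1/2 - 1/W)*(42*W) = 21*W - 42*((1/W)*W) := by ring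
  rw [hWW] at d3
  have hWb : W < 63/10 := by linarith [d2, d3, hDBW]
  -- U < 168/41
  have d4 : (1 - 2/U) ≤ D := by
    rw [hD]
    have : 1/U + 1/U = 2/U := by ring
    linarith
  have d5 : (1 - 2/U)*(42*U) ≤ D*(42*U) := by
    apply mul_le_mul_of_nonneg_right d4 (by positivity)
  have d6 : (1 - 2/U)*(42*U) = 42*U - 84*((1/U)*U) := by ring
  rw [hUU] at d6
  have hUb : U < 168/41 := by linarith [d5, d6, hDBU]
  -- X < 67/10
  have d7 : 14*W < (67/10)*(W + 7) := by linarith [hWb]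
  have hXb : X < 67/10 := by
    by_contra hc
    push_neg at hc
    have h9 := mul_le_mul_of_nonneg_right hc (show (0:ℚ) ≤ W + 7 by linarith)
    linarith [hA, d7, h9]
  -- product
  have p1 : U*W < (168/41)*(63/10) := mul_lt_mul'' hUb hWb (by linarith) (by linarith)
  have p2 : (U*W)*X < ((168/41)*(63/10))*(67/10) :=
    mul_lt_mul'' p1 hXb (by positivity) (by linarith)
  linarith [hpk, p2]

lemma PK3 {D U V W X : ℚ} (hV2 : 2 ≤ V) (hVU : V ≤ U) (hUW : U ≤ W) (hWX : W ≤ X)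
    (hD : D = 1 - 1/V - 1/U - 1/W) (hS : 1/6 ≤ 1 - 1/U - 1/V)
    (hDBW : D*1806*W < W + 3612) (hDBU : D*1806*U < U + 3612)
    (hDBV : D*1806*V < V + 3612)
    (hA : X*(W + 43) < 86*W) (hpk : 77701 ≤ V*U*W*X) : False := by
  have hV0 : (0:ℚ) < V := by linarith
  have hU0 : (0:ℚ) < U := by linarith
  have hW0 : (0:ℚ) < W := by linarith
  have hX0 : (0:ℚ) < X := by linarith
  have hiV : 1/V ≤ 1/2 := one_div_le_one_div_of_le two_pos hV2
  have hiU : 1/U ≤ 1/V := one_div_le_one_div_of_le hV0 hVU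
  have hiW : 1/W ≤ 1/U := one_div_le_one_div_of_le hU0 hUW
  have hWW : (1/W)*W = 1 := by field_simp
  have hUU : (1/U)*U = 1 := by field_simp
  have hVV : (1/V)*V = 1 := by field_simp
  -- W < 903/50
  have d1 : (1/6 - 1/W) ≤ D := by rw [hD]; linarith
  have d2 : (1/6 - 1/W)*(1806*W) ≤ D*(1806*W) :=
    mul_le_mul_of_nonneg_right d1 (by positivity)
  have d3 : (1/6 - 1/W)*(1806*W) = 301*W - 1806*((1/W)*W) := by ring
  rw [hWW] at d3
  have hWb : W < 903/50 := by linarith [d2, d3, hDBW]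
  -- U < 3612/451
  have d4 : (1/2 - 2/U) ≤ D := by
    rw [hD]
    have : 1/U + 1/U = 2/U := by ring
    linarith
  have d5 : (1/2 - 2/U)*(1806*U) ≤ D*(1806*U) :=
    mul_le_mul_of_nonneg_right d4 (by positivity)
  have d6 : (1/2 - 2/U)*(1806*U) = 903*U - 3612*((1/U)*U) := by ring
  rw [hUU] at d6
  have hUb : U < 3612/451 := by linarith [d5, d6, hDBU]
  -- V < 1806/361
  have d7 : (1 - 3/V) ≤ D := by
    rw [hD]
    have : 1/V + 1/V + 1/V = 3/V := by ring
    linarith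
  have d8 : (1 - 3/V)*(1806*V) ≤ D*(1806*V) :=
    mul_le_mul_of_nonneg_right d7 (by positivity)
  have d9 : (1 - 3/V)*(1806*V) = 1806*V - 5418*((1/V)*V) := by ring
  rw [hVV] at d9
  have hVb : V < 1806/361 := by linarith [d8, d9, hDBV]
  -- X < 26
  have d10 : 86*W < 26*(W + 43) := by linarith [hWb]
  have hXb : X < 26 := by
    by_contra hc
    push_neg at hc
    have h9 := mul_le_mul_of_nonneg_right hc (show (0:ℚ) ≤ W + 43 by linarith)
    linarith [hA, d10, h9]
  -- product
  have p1 : V*U < (1806/361)*(3612/451) := mul_lt_mul'' hVb hUb (by linarith) (by linarith)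
  have p2 : (V*U)*W < ((1806/361)*(3612/451))*(903/50) :=
    mul_lt_mul'' p1 hWb (by positivity) (by linarith)
  have p3 : ((V*U)*W)*X < (((1806/361)*(3612/451))*(903/50))*26 :=
    mul_lt_mul'' p2 hXb (by positivity) (by linarith)
  linarith [hpk, p3]


lemma LB_X {X W ee : ℚ} (hW0 : 0 < W) (hee1 : 1 ≤ ee) (hX0 : 0 < X)
    (hA : X*(W + ee + 1) < 2*(ee+1)*W) : X < 2*(ee+1) ∧ X < 2*W := by
  have h1 : X*W + X*(ee+1) < 2*(ee+1)*W := by nlinarith [hA]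
  constructor
  · have h2 : X*W < (2*(ee+1))*W := by nlinarith [mul_pos hX0 (show (0:ℚ) < ee + 1 by linarith)]
    exact lt_of_mul_lt_mul_right h2 (le_of_lt hW0)
  · have h3 : X*(ee+1) < (2*W)*(ee+1) := by nlinarith [mul_pos hX0 hW0]
    exact lt_of_mul_lt_mul_right h3 (by linarith)

lemma final_pocket {A E x : ℕ} (hE : 1 ≤ E) (hA2 : A * 2 ≤ E * E) (hx : x ≤ 2*E + 1)
    (hpx : (E+1)*(E*(E+1)+1) ≤ A * x) : False := by
  have c2 : (A*2)*x ≤ (E*E)*(2*E+1) := Nat.mul_le_mul hA2 hx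
  nlinarith [hpx, c2, hE]

theorem master : ∀ n : ℕ, ∀ l : List ℕ, Gd l → l.length = n → 0 < dl l →
    1 ≤ dl l * e n ∧
      ((Pn l : ℚ) + 1 ≤ dl l * e (n+1) ∨
        ∃ x p, l = x :: p ∧ (e n : ℚ) + x ≤ dl l * e n * x) := by
  intro n
  induction n using Nat.strong_induction_on with
  | _ n IH =>
  intro l hg hlen hpos
  rcases l with _ | ⟨x, p⟩
  · simp at hlen
    subst hlen
    constructor
    · norm_num [e]
    · left; norm_num [Pn, e]
  · simp only [List.length_cons] at hlen
    subst hlen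
    have hgp : Gd p := Gd_of_cons hg
    have hx2 : 2 ≤ x := hg.2 x (by simp)
    have hxall : ∀ y ∈ p, y ≤ x := Gd_head_ge hg
    have hX0 : (0:ℚ) < (x:ℚ) := by exact_mod_cast by omega
    have hX2 : (2:ℚ) ≤ (x:ℚ) := by exact_mod_cast hx2
    have hdl : dl (x :: p) = dl p - 1/(x:ℚ) := dl_cons x p
    have hDpos : 0 < dl p := by
      have h0 : (0:ℚ) < 1/(x:ℚ) := by positivity
      rw [hdl] at hpos; linarith
    obtain ⟨hKp, hLp⟩ := IH p.length (by omega) p hgp rfl hDpos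
    have hT0 := one_le_PD hg hpos
    have hPl : (Pn (x :: p) : ℚ) = (Pn p : ℚ) * (x:ℚ) := by
      rw [Pn_cons]; push_cast; ring
    have hP1 : (1:ℚ) ≤ (Pn p : ℚ) := by exact_mod_cast Pn_pos hgp
    have hee1 : (1:ℚ) ≤ (e p.length : ℚ) := by exact_mod_cast one_le_e p.length
    have hE1q : (e (p.length + 1) : ℚ) = (e p.length : ℚ) * ((e p.length : ℚ) + 1) := by
      rw [e_succ]; push_cast; ring
    have hE2q : (e (p.length + 2) : ℚ) =
        (e (p.length+1) : ℚ) * ((e (p.length+1) : ℚ) + 1) := by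
      rw [show p.length + 2 = (p.length + 1) + 1 from rfl, e_succ]; push_cast; ring
    have hE10 : (0:ℚ) < (e (p.length+1) : ℚ) := by exact_mod_cast e_pos _
    have hT : 1 ≤ (Pn p : ℚ) * (x:ℚ) * (dl p - 1/(x:ℚ)) := by
      rw [hdl, hPl] at hT0; exact hT0
    rw [hdl, hPl, show p.length + 1 + 1 = p.length + 2 from rfl]
    rcases hLp with hD1 | hD2'
    · -- CASE A : parent satisfies D1
      refine ⟨LA_K hX0 hP1 hE10 hT hD1, ?_⟩
      rcases le_or_gt ((Pn p : ℚ) * (x:ℚ)) ((e (p.length+1) : ℚ)) with h1 | h1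
      · left; exact LA_i hX0 hP1 hE10 hT h1 hE2q
      · rcases le_or_gt ((x:ℚ)) ((e (p.length+1) : ℚ) + 1) with h2 | h2
        · left; exact LA_ii hX0 hP1 hE10 hD1 (le_of_lt h1) h2 hE2q
        · right
          refine ⟨x, p, rfl, ?_⟩
          rcases eq_or_ne p [] with hpe | hpe
          · subst hpe
            have he1 : ((e (([] : List ℕ).length + 1) : ℕ) : ℚ) = 2 := by norm_num [e]
            have hD1' : dl ([] : List ℕ) = 1 := by simp
            rw [he1, hD1']
            rw [he1] at h2
            have hx4 : (4:ℚ) ≤ (x:ℚ) := by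
              have h5 : (3:ℕ) < x := by
                exact_mod_cast (show ((3:ℕ):ℚ) < (x:ℚ) by push_cast; linarith)
              exact_mod_cast (by omega : (4:ℕ) ≤ x)
            exact LA_iii0 hx4 rfl
          · have hP2 : (2:ℚ) ≤ (Pn p : ℚ) := by
              rcases p with _ | ⟨w, q⟩
              · exact absurd rfl hpe
              · exact_mod_cast Pn_two hgp
            exact LA_iii hX0 hE10 hD1 hP2 h2
    · -- CASE B : parent satisfies D2
      obtain ⟨w, q, hpq, hD2⟩ := hD2'
      have hw2 : 2 ≤ w := hgp.2 w (by rw [hpq]; simp)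
      have hwx : w ≤ x := hxall w (by rw [hpq]; simp)
      have hW0 : (0:ℚ) < (w:ℚ) := by exact_mod_cast by omega
      have hWX : (w:ℚ) ≤ (x:ℚ) := by exact_mod_cast hwx
      have hde : 1 ≤ (dl p - 1/(x:ℚ)) * (e p.length : ℚ) :=
        LB_de hX0 hW0 hWX hee1 hD2
      have hG1 : 1 ≤ (dl p - 1/(x:ℚ)) * (e (p.length+1) : ℚ) := by
        rw [hE1q]
        nlinarith [hde, hee1]
      refine ⟨hG1, ?_⟩
      rcases le_or_gt ((e (p.length+1) : ℚ) + (x:ℚ))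
        ((dl p - 1/(x:ℚ)) * (e (p.length+1) : ℚ) * (x:ℚ)) with hB | hB
      · right; exact ⟨x, p, rfl, hB⟩
      · have hA : (x:ℚ)*((w:ℚ) + (e p.length : ℚ) + 1) <
            2*((e p.length : ℚ)+1)*(w:ℚ) :=
          LB_A hX0 hW0 hWX hee1 hD2 hE1q hB
        rcases le_or_gt ((Pn p : ℚ) * (x:ℚ) + 1)
          (((e p.length : ℚ)+1)*((e (p.length+1) : ℚ)+1)) with h3 | h3
        · left; exact LB_v1 hX0 hee1 hde h3 hE1q hE2q
        · -- POCKET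
          exfalso
          obtain ⟨hXe2, hXW2⟩ := LB_X hW0 hee1 hX0 hA
          have hDB' : dl p * (e (p.length+1) : ℚ) * (x:ℚ) < (x:ℚ) + 2*(e (p.length+1) : ℚ) := by
            have hXne : (x:ℚ) ≠ 0 := ne_of_gt hX0
            have hDX' : dl p * (e (p.length+1) : ℚ) * (x:ℚ) =
                (dl p - 1/(x:ℚ)) * (e (p.length+1) : ℚ) * (x:ℚ) + (e (p.length+1) : ℚ) := by
              field_simp; ring
            linarith
          -- dispatch on the length of q
          match q, hpq with
          | [], hpq =>
            -- ν = 1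
            subst hpq
            have hDW : dl [w] = 1 - 1/(w:ℚ) := by simp only [dl_cons, dl_nil]
            have hee : ((e ([w] : List ℕ).length : ℕ) : ℚ) = 2 := by norm_num [e]
            have hE1v : ((e (([w] : List ℕ).length + 1) : ℕ) : ℚ) = 6 := by norm_num [e]
            have hD2' : 2 + (w:ℚ) ≤ dl [w] * 2 * (w:ℚ) := by
              rw [hee] at hD2; exact hD2
            have hDBq : dl [w] * 6 * (x:ℚ) < (x:ℚ) + 2*6 := by
              rw [hE1v] at hDB'; linarith [hDB']
            have hDBW : dl [w] * 6 * (w:ℚ) < (w:ℚ) + 12 := by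
              have := transfer hDpos hW0 hWX (by norm_num : (0:ℚ) < 6) hDBq
              linarith [this]
            exact PK1 (by exact_mod_cast hw2) hDW hD2' hDBW
          | [u], hpq =>
            -- ν = 2
            subst hpq
            have hu2 : 2 ≤ u := hgp.2 u (by simp)
            have huw : u ≤ w := Gd_head_ge hgp u (by simp)
            have hU0 : (0:ℚ) < (u:ℚ) := by exact_mod_cast by omega
            have hDf : dl [w, u] = 1 - 1/(u:ℚ) - 1/(w:ℚ) := by
              simp only [dl_cons, dl_nil]; try ring
            have hE1v : ((e (([w,u] : List ℕ).length + 1) : ℕ) : ℚ) = 42 := by norm_num [e]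
            have heev : ((e ([w,u] : List ℕ).length : ℕ) : ℚ) = 6 := by norm_num [e]
            have hDBq : dl [w,u] * 42 * (x:ℚ) < (x:ℚ) + 2*42 := by
              rw [hE1v] at hDB'; linarith [hDB']
            have hDBW : dl [w,u] * 42 * (w:ℚ) < (w:ℚ) + 84 := by
              have := transfer hDpos hW0 hWX (by norm_num : (0:ℚ) < 42) hDBq
              linarith [this]
            have hDBU : dl [w,u] * 42 * (u:ℚ) < (u:ℚ) + 84 := by
              have := transfer hDpos hU0 (le_trans (show (u:ℚ) ≤ (w:ℚ) by exact_mod_cast huw) hWX)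
                (by norm_num : (0:ℚ) < 42) hDBq
              linarith [this]
            have hAq : (x:ℚ)*((w:ℚ) + 7) < 14*(w:ℚ) := by
              rw [heev] at hA; linarith [hA]
            have hpk : (301:ℚ) ≤ (u:ℚ)*(w:ℚ)*(x:ℚ) := by
              rw [heev, hE1v] at h3
              have hc1 : ((300:ℕ):ℚ) < ((Pn [w,u] * x : ℕ):ℚ) := by push_cast; linarith [h3]
              have hc2 : (300:ℕ) < Pn [w,u] * x := by exact_mod_cast hc1
              have hc3 : ((301:ℕ):ℚ) ≤ ((Pn [w,u] * x : ℕ):ℚ) := by exact_mod_cast (by omega : (301:ℕ) ≤ Pn [w,u] * x)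
              have hPP : Pn [w,u] = w*u := by simp [Pn]
              rw [hPP] at hc3
              push_cast at hc3
              linarith [hc3]
            exact PK2 (by exact_mod_cast hu2) (by exact_mod_cast huw) hWX hDf hDBW hDBU hAq hpk
          | [u, v], hpq =>
            -- ν = 3
            subst hpq
            have hu2 : 2 ≤ u := hgp.2 u (by simp)
            have hv2 : 2 ≤ v := hgp.2 v (by simp)
            have huw : u ≤ w := Gd_head_ge hgp u (by simp)
            have hvu : v ≤ u := Gd_head_ge (Gd_of_cons hgp) v (by simp)
            have hU0 : (0:ℚ) < (u:ℚ) := by exact_mod_cast by omega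
            have hV0 : (0:ℚ) < (v:ℚ) := by exact_mod_cast by omega
            have hDf : dl [w, u, v] = 1 - 1/(v:ℚ) - 1/(u:ℚ) - 1/(w:ℚ) := by
              simp only [dl_cons, dl_nil]; try ring
            have hE1v : ((e (([w,u,v] : List ℕ).length + 1) : ℕ) : ℚ) = 1806 := by norm_num [e]
            have heev : ((e ([w,u,v] : List ℕ).length : ℕ) : ℚ) = 42 := by norm_num [e]
            -- Kellogg for [u, v]
            have hguv : Gd [u, v] := Gd_of_cons hgp
            have hpuv : 0 < dl [u,v] := by
              have h6 : dl [u,v] = dl [w,u,v] + 1/(w:ℚ) := by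
                rw [show dl [w,u,v] = dl [u,v] - 1/(w:ℚ) from dl_cons w [u,v]]; ring
              rw [h6]; positivity
            have hKuv := (IH 2 (by norm_num) [u,v] hguv rfl hpuv).1
            have he2 : ((e 2 : ℕ) : ℚ) = 6 := by norm_num [e]
            have hS : (1:ℚ)/6 ≤ 1 - 1/(u:ℚ) - 1/(v:ℚ) := by
              have h7 : dl [u,v] = 1 - 1/(u:ℚ) - 1/(v:ℚ) := by simp only [dl_cons, dl_nil]; try ring
              rw [he2, h7] at hKuv
              linarith [hKuv]
            have hDBq : dl [w,u,v] * 1806 * (x:ℚ) < (x:ℚ) + 2*1806 := by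
              rw [hE1v] at hDB'; linarith [hDB']
            have hDBW : dl [w,u,v] * 1806 * (w:ℚ) < (w:ℚ) + 3612 := by
              have := transfer hDpos hW0 hWX (by norm_num : (0:ℚ) < 1806) hDBq
              linarith [this]
            have hDBU : dl [w,u,v] * 1806 * (u:ℚ) < (u:ℚ) + 3612 := by
              have := transfer hDpos hU0 (le_trans (show (u:ℚ) ≤ (w:ℚ) by exact_mod_cast huw) hWX)
                (by norm_num : (0:ℚ) < 1806) hDBq
              linarith [this]
            have hDBV : dl [w,u,v] * 1806 * (v:ℚ) < (v:ℚ) + 3612 := by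
              have := transfer hDpos hV0
                (le_trans (show (v:ℚ) ≤ (w:ℚ) by exact_mod_cast le_trans hvu huw) hWX)
                (by norm_num : (0:ℚ) < 1806) hDBq
              linarith [this]
            have hAq : (x:ℚ)*((w:ℚ) + 43) < 86*(w:ℚ) := by
              rw [heev] at hA; linarith [hA]
            have hpk : (77701:ℚ) ≤ (v:ℚ)*(u:ℚ)*(w:ℚ)*(x:ℚ) := by
              rw [heev, hE1v] at h3
              have hc1 : ((77700:ℕ):ℚ) < ((Pn [w,u,v] * x : ℕ):ℚ) := by push_cast; linarith [h3]
              have hc2 : (77700:ℕ) < Pn [w,u,v] * x := by exact_mod_cast hc1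
              have hc3 : ((77701:ℕ):ℚ) ≤ ((Pn [w,u,v] * x : ℕ):ℚ) := by
                exact_mod_cast (by omega : (77701:ℕ) ≤ Pn [w,u,v] * x)
              have hPP : Pn [w,u,v] = w*(u*v) := by simp [Pn]; try ring
              rw [hPP] at hc3
              push_cast at hc3
              linarith [hc3]
            exact PK3 (by exact_mod_cast hv2) (by exact_mod_cast hvu)
              (by exact_mod_cast huw) hWX hDf hS hDBW hDBU hDBV hAq hpk
          | (u :: v :: z :: rest), hpq =>
            -- ν ≥ 4 : use the cascade
            subst hpq
            have hlen4 : 4 ≤ (w :: u :: v :: z :: rest).length := by simp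
            set p' : List ℕ := w :: u :: v :: z :: rest with hp'
            have hIHK : ∀ s : List ℕ, Gd s → 0 < dl s → s.length ≤ p'.length →
                1 ≤ dl s * e s.length := by
              intro s hgs hps hls
              exact (IH s.length (by omega) s hgs rfl hps).1
            have hcas := cascade p' hgp hDpos x hxall hIHK hDB' p' [] (by simp)
            simp only [List.length_nil] at hcas
            have hfac2 : (0 + 2).factorial = 2 := by norm_num [Nat.factorial]
            rw [hfac2] at hcas
            -- hcas : Pn p' * 2 ≤ (p'.length + 2).factorial * e p'.length
            have hfe : (p'.length + 2).factorial ≤ e p'.length := fact_le_e _ hlen4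
            have hxe : x ≤ 2 * e p'.length + 1 := by
              have h8 : ((x:ℕ):ℚ) < ((2 * e p'.length + 2 : ℕ) : ℚ) := by
                push_cast; linarith [hXe2]
              have := (Nat.cast_lt (α := ℚ)).mp h8
              omega
            have hpx : (e p'.length + 1) * (e (p'.length+1) + 1) ≤ Pn p' * x := by
              have h9 : (((e p'.length + 1) * (e (p'.length+1) + 1) : ℕ) : ℚ) <
                  ((Pn p' * x + 1 : ℕ) : ℚ) := by
                push_cast; push_cast at h3; linarith [h3]
              have := (Nat.cast_lt (α := ℚ)).mp h9
              omega
            have hesucc : e (p'.length + 1) = e p'.length * (e p'.length + 1) := e_succ _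
            have hE1' : 1 ≤ e p'.length := one_le_e _
            have c1 : Pn p' * 2 ≤ e p'.length * e p'.length :=
              le_trans hcas (Nat.mul_le_mul_right _ hfe)
            rw [hesucc] at hpx
            exact final_pocket hE1' c1 hxe hpx

lemma kellogg (l : List ℕ) (hg : Gd l) (hpos : 0 < dl l) : 1 ≤ dl l * e l.length :=
  (master l.length l hg rfl hpos).1

/-- prefix list (in descending order): pref A k = [A (k-1), ..., A 0] -/
def pref (A : ℕ → ℕ) : ℕ → List ℕ
  | 0 => []
  | k+1 => A k :: pref A k

@[simp] lemma pref_len (A : ℕ → ℕ) : ∀ k, (pref A k).length = k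
  | 0 => rfl
  | k+1 => by simp [pref, pref_len A k]

lemma pref_sr (A : ℕ → ℕ) : ∀ k, sr (pref A k) = ∑ i ∈ Finset.range k, (1:ℚ)/(A i)
  | 0 => by simp [pref]
  | k+1 => by rw [pref, sr_cons, pref_sr A k, Finset.sum_range_succ]; ring

lemma pref_Pn (A : ℕ → ℕ) : ∀ k, Pn (pref A k) = ∏ i ∈ Finset.range k, A i
  | 0 => rfl
  | k+1 => by rw [pref, Pn_cons, pref_Pn A k, Finset.prod_range_succ]; ring

lemma pref_mem (A : ℕ → ℕ) : ∀ k, ∀ y ∈ pref A k, ∃ i, i < k ∧ y = A i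
  | 0 => by simp [pref]
  | k+1 => by
    intro y hy
    rcases List.mem_cons.1 hy with h | h
    · exact ⟨k, by omega, h⟩
    · obtain ⟨i, hi, hyi⟩ := pref_mem A k y h
      exact ⟨i, by omega, hyi⟩

lemma pref_Gd (A : ℕ → ℕ) (hA2 : ∀ i, 2 ≤ A i) (hAm : Monotone A) :
    ∀ k, Gd (pref A k)
  | 0 => Gd_nil
  | k+1 => by
    constructor
    · rw [pref, List.pairwise_cons]
      refine ⟨?_, (pref_Gd A hA2 hAm k).1⟩
      intro y hy
      obtain ⟨i, hi, rfl⟩ := pref_mem A k y hy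
      exact hAm (by omega)
    · intro y hy
      obtain ⟨i, _, rfl⟩ := pref_mem A (k+1) y hy
      exact hA2 i

lemma prod_e_le : ∀ K, (∏ k ∈ Finset.range K, e k) ≤ e K := by
  intro K
  induction K with
  | zero => simp [e]
  | succ K ih =>
    rw [Finset.prod_range_succ]
    calc (∏ k ∈ Finset.range K, e k) * e K ≤ e K * e K :=
          Nat.mul_le_mul_right _ ih
      _ ≤ e K * (e K + 1) := Nat.mul_le_mul_left _ (by omega)
      _ = e (K+1) := (e_succ K).symm

lemma prod_desc (m : ℕ) : ∀ K, K ≤ m →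
    (∏ k ∈ Finset.range K, (m - k)) * (m - K).factorial = m.factorial := by
  intro K
  induction K with
  | zero => simp
  | succ K ih =>
    intro hK
    have h1 : m - K = (m - (K+1)) + 1 := by omega
    have h2 : (m - K).factorial = (m - K) * (m - (K+1)).factorial := by
      rw [h1]; rfl
    rw [Finset.prod_range_succ]
    calc (∏ k ∈ Finset.range K, (m - k)) * (m - K) * (m - (K+1)).factorial
        = (∏ k ∈ Finset.range K, (m - k)) * ((m - K) * (m - (K+1)).factorial) := by ring
      _ = (∏ k ∈ Finset.range K, (m - k)) * (m - K).factorial := by rw [h2]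
      _ = m.factorial := ih (by omega)

lemma extremal_eq_e : ∀ k, extremal (k+1) = e k + 1 := by
  intro k
  induction k with
  | zero => rfl
  | succ k ih =>
    show extremal (k+1+1) = e (k+1) + 1
    rw [extremal, ih, e_succ]
    have h1 : 1 ≤ e k := one_le_e k
    have : (e k + 1)^2 = e k * (e k + 1) + (e k + 1) := by ring
    omega

set_option maxHeartbeats 1000000 in
theorem main_bound (m : ℕ) (hm : 3 < m) (a : Fin m → ℕ)
    (hmono : Monotone a) (hpos : ∀ i, 0 < a i)
    (h1 : KE1 a) (h2 : KE2 a) :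
    (∏ i ∈ Finset.univ.filter (fun i : Fin m => (i : ℕ) < m - 1), a i) ≤
      m.factorial * (extremal m - 1) ∧
    (1 < ∑ i ∈ Finset.univ.filter (fun i : Fin m => (i : ℕ) < m - 1), (1 : ℚ) / (a i : ℚ) →
      1 + 1 / ((m.factorial * (extremal m - 1) : ℕ) : ℚ) <
        ∑ i ∈ Finset.univ.filter (fun i : Fin m => (i : ℕ) < m - 1), (1 : ℚ) / (a i : ℚ)) := by
  have hm0 : 0 < m := by omega
  haveI : Nonempty (Fin m) := ⟨⟨0, hm0⟩⟩
  -- total extension of a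
  set A : ℕ → ℕ := fun k => a ⟨min k (m-1), lt_of_le_of_lt (Nat.min_le_right _ _) (by omega)⟩
    with hA
  have hAlt : ∀ (k : ℕ) (h : k < m), A k = a ⟨k, h⟩ := by
    intro k h
    have hmin : min k (m-1) = k := by omega
    simp only [hA, hmin]
  have hApos : ∀ k, 0 < A k := fun k => hpos _
  have hAmono : Monotone A := by
    intro i j hij
    apply hmono
    rw [Fin.mk_le_mk]
    omega
  set amax := a ⟨m-1, by omega⟩ with hamax
  have hle_amax : ∀ i : Fin m, a i ≤ amax := by
    intro i
    apply hmono
    rw [Fin.le_def]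
    simp
    omega
  have hAle : ∀ k, A k ≤ amax := fun k => hle_amax _
  have hamax_pos : 0 < amax := hpos _
  have hamaxq : (0:ℚ) < (amax:ℚ) := by exact_mod_cast hamax_pos
  -- finMin computation
  have hfm : finMin (fun i : Fin m => (1:ℚ)/(a i)) = 1/(amax:ℚ) := by
    rw [finMin, dif_pos Finset.univ_nonempty]
    apply le_antisymm
    · exact Finset.inf'_le _ (Finset.mem_univ (⟨m-1, by omega⟩ : Fin m))
    · apply Finset.le_inf'
      intro b _
      apply one_div_le_one_div_of_le
      · exact_mod_cast hpos b
      · exact_mod_cast hle_amax b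
  have hKE2 : recipSum a < 1 + ((m:ℚ)-1)/((m:ℚ)-2) * (1/(amax:ℚ)) := by
    rw [← hfm]; exact h2
  have hsum_all : recipSum a = ∑ k ∈ Finset.range m, (1:ℚ)/(A k) := by
    rw [recipSum, ← Fin.sum_univ_eq_sum_range (fun k => (1:ℚ)/(A k)) m]
    apply Finset.sum_congr rfl
    intro i _
    rw [hAlt i.1 i.2]
  have hsplit : ∀ k, k ≤ m → (∑ i ∈ Finset.range m, (1:ℚ)/(A i)) =
      (∑ i ∈ Finset.range k, (1:ℚ)/(A i)) + ∑ i ∈ Finset.Ico k m, (1:ℚ)/(A i) := by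
    intro k hk
    have h12 := Finset.sum_Ico_consecutive (fun i => (1:ℚ)/(A i)) (Nat.zero_le k) hk
    rw [Finset.range_eq_Ico, Finset.range_eq_Ico]
    exact h12.symm
  have htail_lb : ∀ k, k ≤ m → ((m - k : ℕ):ℚ) * (1/(amax:ℚ)) ≤
      ∑ i ∈ Finset.Ico k m, (1:ℚ)/(A i) := by
    intro k hk
    calc ((m-k:ℕ):ℚ) * (1/(amax:ℚ)) = ∑ _i ∈ Finset.Ico k m, (1:ℚ)/(amax:ℚ) := by
          rw [Finset.sum_const, Nat.card_Ico, nsmul_eq_mul]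
      _ ≤ ∑ i ∈ Finset.Ico k m, (1:ℚ)/(A i) := by
          apply Finset.sum_le_sum
          intro i _
          apply one_div_le_one_div_of_le
          · exact_mod_cast hApos i
          · exact_mod_cast hAle i
  -- prefix sums are < 1
  have hprefix_lt1 : ∀ k, k ≤ m - 2 → (∑ i ∈ Finset.range k, (1:ℚ)/(A i)) < 1 := by
    intro k hk
    by_contra hc
    push_neg at hc
    have h5 := htail_lb k (by omega)
    have h6 : 1 + ((m-k:ℕ):ℚ)*(1/(amax:ℚ)) ≤ recipSum a := by
      rw [hsum_all, hsplit k (by omega)]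
      linarith
    have ht : (0:ℚ) < 1/(amax:ℚ) := by positivity
    have h7 : ((m-k:ℕ):ℚ) * (1/(amax:ℚ)) < ((m:ℚ)-1)/((m:ℚ)-2) * (1/(amax:ℚ)) := by
      linarith [hKE2, h6]
    have h10 : ((m-k:ℕ):ℚ) < ((m:ℚ)-1)/((m:ℚ)-2) :=
      lt_of_mul_lt_mul_right (by linarith [h7]) (le_of_lt ht)
    have h8 : (2:ℚ) ≤ ((m-k:ℕ):ℚ) := by exact_mod_cast (by omega : 2 ≤ m - k)
    have hm4 : (4:ℚ) ≤ (m:ℚ) := by exact_mod_cast (by omega : 4 ≤ m)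
    have h9 : ((m:ℚ)-1)/((m:ℚ)-2) < 2 := by
      rw [div_lt_iff₀ (by linarith)]
      linarith
    linarith
  have hA02 : 2 ≤ A 0 := by
    by_contra hc
    push_neg at hc
    have h01 : A 0 = 1 := by have := hApos 0; omega
    have h02 := hprefix_lt1 1 (by omega)
    rw [Finset.sum_range_one, h01] at h02
    norm_num at h02
  have hA2 : ∀ i, 2 ≤ A i := fun i => le_trans hA02 (hAmono (Nat.zero_le i))
  have hKE1 : 1 < ∑ k ∈ Finset.range m, (1:ℚ)/(A k) := by rw [← hsum_all]; exact h1
  -- the key elementwise bound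
  have helem : ∀ k, k ≤ m - 2 → A k < (m - k) * e k := by
    intro k hk
    have hg := pref_Gd A hA2 hAmono k
    have hdl_eq : dl (pref A k) = 1 - ∑ i ∈ Finset.range k, (1:ℚ)/(A i) := by
      rw [dl, pref_sr]
    have hdlpos : 0 < dl (pref A k) := by
      rw [hdl_eq]; linarith [hprefix_lt1 k hk]
    have hKel := kellogg _ hg hdlpos
    rw [pref_len] at hKel
    have htail_ub : ∑ i ∈ Finset.Ico k m, (1:ℚ)/(A i) ≤ ((m-k:ℕ):ℚ) * (1/(A k:ℚ)) := by
      calc ∑ i ∈ Finset.Ico k m, (1:ℚ)/(A i) ≤ ∑ _i ∈ Finset.Ico k m, (1:ℚ)/(A k) := by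
            apply Finset.sum_le_sum
            intro i hi
            apply one_div_le_one_div_of_le
            · exact_mod_cast hApos k
            · exact_mod_cast hAmono (Finset.mem_Ico.1 hi).1
        _ = ((m-k:ℕ):ℚ) * (1/(A k:ℚ)) := by
            rw [Finset.sum_const, Nat.card_Ico, nsmul_eq_mul]
    have hr : 1 - (∑ i ∈ Finset.range k, (1:ℚ)/(A i)) < ((m-k:ℕ):ℚ)*(1/(A k:ℚ)) := by
      have h11 := hsplit k (by omega)
      linarith [hKE1, htail_ub]
    have hek : (0:ℚ) < (e k:ℚ) := by exact_mod_cast e_pos k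
    have hAk : (0:ℚ) < (A k:ℚ) := by exact_mod_cast hApos k
    have c1 : dl (pref A k) * (A k:ℚ) < ((m-k:ℕ):ℚ) := by
      rw [hdl_eq]
      have c0 := mul_lt_mul_of_pos_right hr hAk
      have c2 : (((m-k:ℕ):ℚ)*(1/(A k:ℚ)))*(A k:ℚ) = ((m-k:ℕ):ℚ) := by field_simp
      linarith [c0, c2]
    have c3 : (A k:ℚ) * 1 ≤ (A k:ℚ) * (dl (pref A k) * (e k:ℚ)) :=
      mul_le_mul_of_nonneg_left hKel (by linarith)
    have hq : (A k:ℚ) < ((m-k:ℕ):ℚ) * (e k:ℚ) := by nlinarith [c1, c3, hek]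
    have hq2 : ((A k:ℕ):ℚ) < (((m-k)*e k : ℕ):ℚ) := by push_cast; push_cast at hq; linarith
    exact_mod_cast hq2
  -- the product bound
  have hprod_lt : (∏ k ∈ Finset.range (m-1), A k) < m.factorial * e (m-1) := by
    have h1' : (∏ k ∈ Finset.range (m-1), A k) < ∏ k ∈ Finset.range (m-1), ((m-k)*e k) := by
      apply Finset.prod_lt_prod_of_nonempty
      · intro i _; exact hApos i
      · intro i hi
        exact helem i (by simp only [Finset.mem_range] at hi; omega)
      · exact ⟨0, by simp only [Finset.mem_range]; omega⟩
    have h2' : (∏ k ∈ Finset.range (m-1), ((m-k)*e k)) =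
        (∏ k ∈ Finset.range (m-1), (m-k)) * (∏ k ∈ Finset.range (m-1), e k) :=
      Finset.prod_mul_distrib
    have h3' : (∏ k ∈ Finset.range (m-1), (m-k)) = m.factorial := by
      have h30 := prod_desc m (m-1) (by omega)
      have h4' : m - (m-1) = 1 := by omega
      rw [h4'] at h30
      simpa [Nat.factorial] using h30
    have h5' : (∏ k ∈ Finset.range (m-1), e k) ≤ e (m-1) := prod_e_le (m-1)
    calc (∏ k ∈ Finset.range (m-1), A k) < _ := h1'
      _ = m.factorial * (∏ k ∈ Finset.range (m-1), e k) := by rw [h2', h3']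
      _ ≤ m.factorial * e (m-1) := Nat.mul_le_mul_left _ h5'
  -- bridges between Fin-filter and range (m-1)
  have hmm1 : Finset.range m = Finset.range ((m-1)+1) := by
    congr 1; omega
  have hProd : (∏ i ∈ Finset.univ.filter (fun i : Fin m => (i : ℕ) < m - 1), a i) =
      ∏ k ∈ Finset.range (m-1), A k := by
    calc (∏ i ∈ Finset.univ.filter (fun i : Fin m => (i : ℕ) < m - 1), a i)
        = ∏ i : Fin m, (if (i:ℕ) < m - 1 then a i else 1) := Finset.prod_filter _ _
      _ = ∏ i : Fin m, (if ((i:ℕ)) < m - 1 then A (i:ℕ) else 1) := by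
          apply Finset.prod_congr rfl
          intro i _
          split_ifs
          · exact (hAlt i.1 i.2).symm
          · rfl
      _ = ∏ k ∈ Finset.range m, (if k < m - 1 then A k else 1) :=
          Fin.prod_univ_eq_prod_range (fun k => if k < m - 1 then A k else 1) m
      _ = (∏ k ∈ Finset.range (m-1), (if k < m - 1 then A k else 1)) *
            (if m - 1 < m - 1 then A (m-1) else 1) := by
          rw [hmm1, Finset.prod_range_succ]
      _ = ∏ k ∈ Finset.range (m-1), A k := by
          rw [if_neg (lt_irrefl _), mul_one]
          apply Finset.prod_congr rfl
          intro k hk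
          rw [if_pos (Finset.mem_range.1 hk)]
  have hSum : (∑ i ∈ Finset.univ.filter (fun i : Fin m => (i : ℕ) < m - 1),
        (1:ℚ)/(a i : ℚ)) = ∑ k ∈ Finset.range (m-1), (1:ℚ)/(A k : ℚ) := by
    calc (∑ i ∈ Finset.univ.filter (fun i : Fin m => (i : ℕ) < m - 1), (1:ℚ)/(a i:ℚ))
        = ∑ i : Fin m, (if (i:ℕ) < m - 1 then (1:ℚ)/(a i:ℚ) else 0) := Finset.sum_filter _ _
      _ = ∑ i : Fin m, (if ((i:ℕ)) < m - 1 then (1:ℚ)/(A (i:ℕ):ℚ) else 0) := by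
          apply Finset.sum_congr rfl
          intro i _
          split_ifs
          · rw [hAlt i.1 i.2]
          · rfl
      _ = ∑ k ∈ Finset.range m, (if k < m - 1 then (1:ℚ)/(A k:ℚ) else 0) :=
          Fin.sum_univ_eq_sum_range (fun k => if k < m - 1 then (1:ℚ)/(A k:ℚ) else 0) m
      _ = (∑ k ∈ Finset.range (m-1), (if k < m - 1 then (1:ℚ)/(A k:ℚ) else 0)) +
            (if m - 1 < m - 1 then (1:ℚ)/(A (m-1):ℚ) else 0) := by
          rw [hmm1, Finset.sum_range_succ]
      _ = ∑ k ∈ Finset.range (m-1), (1:ℚ)/(A k:ℚ) := by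
          rw [if_neg (lt_irrefl _), add_zero]
          apply Finset.sum_congr rfl
          intro k hk
          rw [if_pos (Finset.mem_range.1 hk)]
  -- extremal m - 1 = e (m-1)
  have hext : extremal m = e (m-1) + 1 := by
    have h40 := extremal_eq_e (m-1)
    rw [show m - 1 + 1 = m by omega] at h40
    exact h40
  have hext1 : extremal m - 1 = e (m-1) := by omega
  constructor
  · rw [hProd, hext1]
    omega
  · intro hS
    rw [hSum] at hS ⊢
    have hgd := pref_Gd A hA2 hAmono (m-1)
    obtain ⟨N, hN⟩ := int_PD (pref A (m-1)) (fun y hy => le_trans one_le_two (hgd.2 y hy))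
    have hdn : dl (pref A (m-1)) = 1 - ∑ k ∈ Finset.range (m-1), (1:ℚ)/(A k:ℚ) := by
      rw [dl, pref_sr]
    have hdlneg : dl (pref A (m-1)) < 0 := by rw [hdn]; linarith
    have hPnpos : (0:ℚ) < (Pn (pref A (m-1)):ℚ) := by exact_mod_cast Pn_pos hgd
    have hNneg : (N:ℚ) < 0 := by
      rw [hN]; exact mul_neg_of_pos_of_neg hPnpos hdlneg
    have hNle : N ≤ -1 := by
      have : N < 0 := by exact_mod_cast hNneg
      omega
    have hNleq : (N:ℚ) ≤ -1 := by exact_mod_cast hNle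
    have hkey : (Pn (pref A (m-1)):ℚ) * (dl (pref A (m-1))) ≤ -1 := by
      rw [← hN]; exact hNleq
    have hQeq : Pn (pref A (m-1)) = ∏ k ∈ Finset.range (m-1), A k := pref_Pn A (m-1)
    -- 1/Pn ≤ S - 1
    have hstep : 1 ≤ (Pn (pref A (m-1)):ℚ) *
        ((∑ k ∈ Finset.range (m-1), (1:ℚ)/(A k:ℚ)) - 1) := by
      rw [hdn] at hkey
      nlinarith [hkey]
    have hdiv : 1/(Pn (pref A (m-1)):ℚ) ≤
        (∑ k ∈ Finset.range (m-1), (1:ℚ)/(A k:ℚ)) - 1 := by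
      rw [div_le_iff₀ hPnpos]
      linarith [hstep]
    -- Pn < m! e(m-1)
    have hlt : (Pn (pref A (m-1)):ℚ) < ((m.factorial * (extremal m - 1) : ℕ):ℚ) := by
      rw [hext1, hQeq]
      exact_mod_cast hprod_lt
    have hpos2 : (0:ℚ) < ((m.factorial * (extremal m - 1) : ℕ):ℚ) := by
      have : 0 < m.factorial * (extremal m - 1) := by
        rw [hext1]
        exact Nat.mul_pos m.factorial_pos (e_pos _)
      exact_mod_cast this
    have hfinal : 1/((m.factorial * (extremal m - 1) : ℕ):ℚ) < 1/(Pn (pref A (m-1)):ℚ) :=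
      one_div_lt_one_div_of_lt hPnpos hlt
    linarith

end KA

/-- Let `m > 3` and let `a` be a nondecreasing `m`-tuple of positive integers satisfying KE
conditions (1) and (2) and the sphere condition. Then the product of the first `m-1`
entries is at most `m! * (c m - 1)` where `c` is the extremal sequence; consequently if
`∑_{i=1}^{m-1} 1/(a i) > 1` then `∑_{i=1}^{m-1} 1/(a i) > 1 + 1/(m! * (c m - 1))`. -/
theorem prod_first_entries_bound (m : ℕ) (hm : 3 < m) (a : Fin m → ℕ)
    (hmono : Monotone a) (hpos : ∀ i, 0 < a i)
    (h1 : KE1 a) (h2 : KE2 a) (hs : SphereCond a) :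
    (∏ i ∈ Finset.univ.filter (fun i : Fin m => (i : ℕ) < m - 1), a i) ≤
      m.factorial * (extremal m - 1) ∧
    (1 < ∑ i ∈ Finset.univ.filter (fun i : Fin m => (i : ℕ) < m - 1), (1 : ℚ) / (a i : ℚ) →
      1 + 1 / ((m.factorial * (extremal m - 1) : ℕ) : ℚ) <
        ∑ i ∈ Finset.univ.filter (fun i : Fin m => (i : ℕ) < m - 1), (1 : ℚ) / (a i : ℚ)) := by
  exact KA.main_bound m hm a hmono hpos h1 h2
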